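/- Let N be an even unimodular lattice and ħ ∈ N primitive. Let F ⊆ N be a sublattice of index 4 with ħ ∈ F, ħ ∈ 4F*, and discr F ≅ ℤ/4 ⊕ ℤ/4 generated by α := a mod F (a ∈ N, a·ħ = 1) and η := (1/4)ħ mod F. Let N′ ⊇ F be the even unimodular extension defined by the isotropic subgroup ⟨α + 2η⟩. Then the set {l ∈ N : l² = 4, l·ħ = 4} equals the set {l ∈ N′ : l² = 4, l·ħ = 4}; that is, replanting preserves the set of 'conics'. -/

import Mathlib

open LinearMap in
/-- "replanting preserves conics": Let `N` be an even unimodular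
ℤ-lattice with a primitive vector `hbar`, and `F ⊆ N` an index-4 sublattice with
`hbar ∈ F`, `hbar ∈ 4F*`, whose discriminant group is generated by the classes of
`a` (where `a ∈ N`, `a·hbar = 1`) and `(1/4)hbar`.  Let `N′ = F + ℤ(a + (1/2)hbar)` be
the even unimodular extension of `F` defined by the isotropic subgroup `⟨α + 2η⟩`.
Then `{l ∈ N : l² = 4, l·hbar = 4} = {l ∈ N′ : l² = 4, l·hbar = 4}`. -/
theorem stmt_18 {V : Type*} [AddCommGroup V] [Module ℚ V] [FiniteDimensional ℚ V]
    (B : LinearMap.BilinForm ℚ V)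
    (hsymm : ∀ x y, B x y = B y x)
    (N : Submodule ℤ V) (hfg : N.FG)
    (hspan : Submodule.span ℚ (N : Set V) = ⊤)
    (hint : ∀ x ∈ N, ∀ y ∈ N, ∃ k : ℤ, B x y = (k : ℚ))
    (heven : ∀ x ∈ N, ∃ k : ℤ, B x x = 2 * (k : ℚ))
    (hunimod : B.dualSubmodule N = N)
    (hbar : V) (hbarN : hbar ∈ N)
    (hprim : ∀ (n : ℤ), ∀ w ∈ N, hbar = n • w → IsUnit n)
    (F : Submodule ℤ V) (hFN : F ≤ N) (hbarF : hbar ∈ F)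
    (hbar4 : ∀ x ∈ F, ∃ k : ℤ, B hbar x = 4 * (k : ℚ))
    (hindex : Nat.card (↥N ⧸ (F.comap N.subtype)) = 4)
    (a : V) (haN : a ∈ N) (hahbar : B a hbar = 1)
    (hgen : B.dualSubmodule F = F ⊔ Submodule.span ℤ {a, (4 : ℚ)⁻¹ • hbar}) :
    ∀ l : V,
      (l ∈ N ∧ B l l = 4 ∧ B l hbar = 4) ↔
      (l ∈ F ⊔ Submodule.span ℤ {a + (2 : ℚ)⁻¹ • hbar} ∧ B l l = 4 ∧ B l hbar = 4) := by
  have hK : True := trivial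
  set K := F.comap N.subtype with hKdef
  haveI : Finite (↥N ⧸ K) := Nat.finite_of_card_ne_zero (by rw [hindex]; norm_num)
  set aN : N := ⟨a, haN⟩ with haNdef
  set aQ : ↥N ⧸ K := Submodule.Quotient.mk aN with haQ
  -- any integer multiple of a landing in F is divisible by 4
  have hdvd : ∀ d : ℤ, d • a ∈ F → (4:ℤ) ∣ d := by
    intro d hd
    obtain ⟨k, hk⟩ := hbar4 _ hd
    rw [hsymm] at hk
    rw [← Int.cast_smul_eq_zsmul ℚ, map_smul₂, smul_eq_mul, hahbar, mul_one] at hk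
    exact ⟨k, by exact_mod_cast hk⟩
  have horder : addOrderOf aQ = 4 := by
    have h1 : addOrderOf aQ ∣ 4 := by
      haveI : Fintype (↥N ⧸ K) := Fintype.ofFinite _
      have := addOrderOf_dvd_card (x := aQ)
      rwa [← Nat.card_eq_fintype_card, hindex] at this
    have h2 : (4:ℤ) ∣ (addOrderOf aQ : ℤ) := by
      apply hdvd
      have h0 : Submodule.Quotient.mk ((addOrderOf aQ : ℤ) • aN) = (0 : ↥N ⧸ K) := by
        rw [Submodule.Quotient.mk_smul]
        exact_mod_cast addOrderOf_nsmul_eq_zero aQ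
      have hmem := (Submodule.Quotient.mk_eq_zero K).mp h0
      simpa [hKdef, haNdef] using hmem
    have h2' : 4 ∣ addOrderOf aQ := by exact_mod_cast h2
    exact Nat.dvd_antisymm h1 h2'
  have h4aF : (4:ℤ) • a ∈ F := by
    have h0 : Submodule.Quotient.mk ((4:ℤ) • aN) = (0 : ↥N ⧸ K) := by
      rw [Submodule.Quotient.mk_smul]
      have := addOrderOf_nsmul_eq_zero aQ
      rw [horder] at this
      exact_mod_cast this
    simpa [hKdef, haNdef] using (Submodule.Quotient.mk_eq_zero K).mp h0
  have htop : AddSubgroup.zmultiples aQ = ⊤ := by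
    apply AddSubgroup.eq_top_of_card_eq
    rw [Nat.card_zmultiples, horder, hindex]
  -- key 1: l ∈ N with B l hbar = 4 lies in F
  have keyN : ∀ l, (hl : l ∈ N) → B l hbar = 4 → l ∈ F := by
    intro l hl hBl
    have hmem : Submodule.Quotient.mk (⟨l, hl⟩ : N) ∈ AddSubgroup.zmultiples aQ := by
      rw [htop]; trivial
    rw [AddSubgroup.mem_zmultiples_iff] at hmem
    obtain ⟨m, hm⟩ := hmem
    have hm' : (Submodule.Quotient.mk (m • aN) : ↥N ⧸ K) = Submodule.Quotient.mk (⟨l, hl⟩ : N) := by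
      rw [Submodule.Quotient.mk_smul K]; exact hm
    have hsub : m • a - l ∈ F := by
      have := (Submodule.Quotient.eq K).mp hm'
      simpa [hKdef, haNdef] using this
    obtain ⟨k, hk⟩ := hbar4 _ hsub
    rw [hsymm] at hk
    rw [map_sub₂, ← Int.cast_smul_eq_zsmul ℚ, map_smul₂, smul_eq_mul, hahbar, mul_one,
      hBl] at hk
    have hm4 : m = 4 * (k + 1) := by
      have : (m:ℚ) = 4 * (k + 1) := by push_cast; linarith
      exact_mod_cast this
    have hma : m • a ∈ F := by
      rw [hm4, mul_comm, mul_smul]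
      exact Submodule.smul_mem F _ h4aF
    have : m • a - (m • a - l) ∈ F := sub_mem hma hsub
    simpa using this
  -- key 2: l ∈ N' with B l hbar = 4 lies in F
  have keyN' : ∀ l, l ∈ F ⊔ Submodule.span ℤ {a + (2 : ℚ)⁻¹ • hbar} → B l hbar = 4 →
      l ∈ F := by
    intro l hl hBl
    rw [Submodule.mem_sup] at hl
    obtain ⟨f, hf, s, hs, rfl⟩ := hl
    rw [Submodule.mem_span_singleton] at hs
    obtain ⟨n, rfl⟩ := hs
    obtain ⟨k, hk⟩ := hbar4 f hf
    rw [hsymm] at hk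
    obtain ⟨m, hm⟩ := hbar4 hbar hbarF
    have hcalc : (4*k + n*(1+2*m) : ℚ) = 4 := by
      rw [map_add₂, hk, ← Int.cast_smul_eq_zsmul ℚ, map_smul₂, smul_eq_mul,
        map_add₂, hahbar, map_smul₂, smul_eq_mul, hm] at hBl
      push_cast
      push_cast at hBl
      linarith
    have heq : n * (1 + 2*m) = 4*(1-k) := by
      have : ((n*(1+2*m) : ℤ) : ℚ) = ((4*(1-k) : ℤ) : ℚ) := by push_cast; linarith
      exact_mod_cast this
    have hn : (4:ℤ) ∣ n := by
      have hodd : ¬ (2:ℤ) ∣ (1 + 2*m) := by omega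
      have h1 : (2:ℤ) ∣ n := by
        have hd : (2:ℤ) ∣ n * (1+2*m) := ⟨2*(1-k), by linarith⟩
        rcases Int.prime_two.dvd_mul.mp hd with h | h
        · exact h
        · exact absurd h hodd
      obtain ⟨n', rfl⟩ := h1
      have heq2 : n' * (1 + 2*m) = 2*(1-k) := by linarith
      have h2 : (2:ℤ) ∣ n' := by
        have hd : (2:ℤ) ∣ n' * (1+2*m) := ⟨1-k, heq2⟩
        rcases Int.prime_two.dvd_mul.mp hd with h | h
        · exact h
        · exact absurd h hodd
      obtain ⟨n'', rfl⟩ := h2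
      exact ⟨n'', by ring⟩
    obtain ⟨t, rfl⟩ := hn
    have hsmul : (4*t : ℤ) • (a + (2 : ℚ)⁻¹ • hbar)
        = t • ((4:ℤ) • a) + t • ((2:ℤ) • hbar) := by
      rw [← Int.cast_smul_eq_zsmul ℚ ((4:ℤ)*t), ← Int.cast_smul_eq_zsmul ℚ t,
        ← Int.cast_smul_eq_zsmul ℚ t ((2:ℤ) • hbar), ← Int.cast_smul_eq_zsmul ℚ (4:ℤ),
        ← Int.cast_smul_eq_zsmul ℚ (2:ℤ)]
      push_cast
      rw [smul_add, smul_smul, smul_smul, smul_smul]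
      ring_nf
    refine add_mem hf ?_
    rw [hsmul]
    exact add_mem (Submodule.smul_mem F t h4aF)
      (Submodule.smul_mem F t (Submodule.smul_mem F 2 hbarF))
  intro l
  constructor
  · rintro ⟨hlN, hll, hlh⟩
    exact ⟨Submodule.mem_sup_left (keyN l hlN hlh), hll, hlh⟩
  · rintro ⟨hlN', hll, hlh⟩
    exact ⟨hFN (keyN' l hlN' hlh), hll, hlh⟩
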